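/- Let τ be a nonempty index set, φ : τ → τ a self-map, and w : τ → ℂ a weight vector such that σ_{φ,w} maps ℓ²(τ) into ℓ²(τ). Then the Hilbert-space adjoint T* of the bounded operator T = σ_{φ,w}|_{ℓ²(τ)} is given coordinatewise by (T*(y))_θ = Σ_{α ∈ φ⁻¹(θ)} conj(w_α) · y_α for every y ∈ ℓ²(τ) and every θ ∈ τ, where the sum on the right converges. -/

import Mathlib

/-- The Hilbert-space adjoint `T*` of the bounded weighted generalized shift
operator `T = σ_{φ,w}|_{ℓ²(τ)}` is given coordinatewise by
`(T*(y))_θ = Σ_{α ∈ φ⁻¹(θ)} conj(w_α) · y_α`, the sum on the right converging. -/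
theorem weighted_shift_adjoint_apply {τ : Type*} [Nonempty τ] (φ : τ → τ) (w : τ → ℂ)
    (T : lp (fun _ : τ => ℂ) 2 →L[ℂ] lp (fun _ : τ => ℂ) 2)
    (hT : ∀ (x : lp (fun _ : τ => ℂ) 2) (α : τ), T x α = w α * x (φ α))
    (y : lp (fun _ : τ => ℂ) 2) (θ : τ) :
    HasSum (fun α : (φ ⁻¹' {θ}) => (starRingEnd ℂ) (w (α : τ)) * y (α : τ))
      (ContinuousLinearMap.adjoint T y θ) := by
  classical
  set e : lp (fun _ : τ => ℂ) 2 := lp.single 2 θ (1 : ℂ) with he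
  have hcoord : (ContinuousLinearMap.adjoint T y) θ
      = inner (𝕜 := ℂ) (T e) y := by
    rw [← ContinuousLinearMap.adjoint_inner_right]
    have := lp.inner_single_left (𝕜 := ℂ) θ (1 : ℂ) (ContinuousLinearMap.adjoint T y)
    simpa using this.symm
  have h := lp.hasSum_inner (𝕜 := ℂ) (T e) y
  rw [← hcoord] at h
  have hsupp : Function.support (fun α : τ =>
      inner (𝕜 := ℂ) (T e α) (y α)) ⊆ φ ⁻¹' {θ} := by
    intro α hα
    by_contra hmem
    apply hα
    simp only [hT, he]
    have : (lp.single 2 θ (1 : ℂ) : lp (fun _ : τ => ℂ) 2) (φ α) = 0 := by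
      rw [lp.single_apply]
      exact Pi.single_eq_of_ne (M := fun _ : τ => ℂ) (by simpa using hmem) 1
    rw [lp.single_apply] at this; simp [this]
  rw [← hasSum_subtype_iff_of_support_subset hsupp] at h
  refine HasSum.congr_fun h fun α => ?_
  have hφ : φ (α : τ) = θ := α.2
  have h1 : (e : ∀ _ : τ, ℂ) (φ (α : τ)) = 1 := by
    rw [hφ, he, lp.single_apply]
    simp
  simp [RCLike.inner_apply, hT, h1, mul_comm]
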